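/- Let X be a nonempty finite type, p_data a probability distribution on X, and K : (X → ℝ) → ℝ a convex function differentiable at p_data. Then strong duality holds for the problem min K(p) over probability distributions p subject to p = p_data: the supremum over all functions c : X → ℝ of (infimum over probability distributions p on X of ∑_x c(x)·(p(x) − p_data(x)) + K(p)) equals K(p_data), and this supremum is attained at the function c(x) = −∂K/∂p(x)|_{p=p_data}, where ∂K/∂p(x) is the Fréchet derivative of K at p_data applied to the x-th coordinate basis vector. -/

import Mathlib

lemma grad_ineq {E : Type*} [NormedAddCommGroup E] [NormedSpace ℝ E]
    {K : E → ℝ} {D : E →L[ℝ] ℝ} {a : E} (hK_conv : ConvexOn ℝ Set.univ K)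
    (hK : HasFDerivAt K D a) (y : E) : K a + D (y - a) ≤ K y := by
  set g : ℝ → ℝ := fun t => K (t • (y - a) + a) with hg
  have hgc : ConvexOn ℝ Set.univ g := by
    have := hK_conv.comp_affineMap (AffineMap.lineMap a y)
    simpa [hg, Function.comp_def, AffineMap.lineMap_apply] using this
  have h1 : HasDerivAt (fun t : ℝ => t • (y - a) + a) (y - a) 0 := by
    simpa using ((hasDerivAt_id (0:ℝ)).smul_const (y - a)).add_const a
  have hd : HasDerivAt g (D (y - a)) 0 := by
    have ha : a = (0:ℝ) • (y - a) + a := by simp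
    rw [ha] at hK
    have := hK.comp_hasDerivAt (x := (0:ℝ)) h1
    simpa [hg, Function.comp_def] using this
  have hs := hgc.le_slope_of_hasDerivAt (Set.mem_univ 0) (Set.mem_univ 1) one_pos hd
  have h2 : slope g 0 1 = K y - K a := by simp [slope_def_field, hg]
  rw [h2] at hs
  linarith

lemma D_eq {X : Type*} [Fintype X] [DecidableEq X] (D : (X → ℝ) →L[ℝ] ℝ) (v : X → ℝ) :
    D v = ∑ x, v x * D (Pi.single x 1) := by
  have hv : v = ∑ x, v x • (Pi.single x (1:ℝ) : X → ℝ) := by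
    funext j
    simp [Finset.sum_apply, Pi.single_apply, mul_comm]
  conv_lhs => rw [hv]
  rw [map_sum]
  simp [smul_eq_mul]

/-- Strong duality for `min K(p)` over probability distributions
subject to `p = p_data`: the supremum over all dual variables `c : X → ℝ` of
the dual function `inf_{p ∈ 𝒫} ∑ c(x)(p(x) - p_data(x)) + K(p)` equals
`K(p_data)`, and the supremum is attained at `c(x) = -∂K/∂p(x)|_{p_data}`. -/
theorem strong_duality_adversarial
    {X : Type*} [Fintype X] [Nonempty X] [DecidableEq X]
    (p_data : X → ℝ)
    (hp_data_nonneg : ∀ x, 0 ≤ p_data x)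
    (hp_data_sum : ∑ x, p_data x = 1)
    (K : (X → ℝ) → ℝ) (D : (X → ℝ) →L[ℝ] ℝ)
    (hK_conv : ConvexOn ℝ Set.univ K)
    (hK : HasFDerivAt K D p_data) :
    (⨆ c : X → ℝ,
        ⨅ p : {p : X → ℝ // (∀ x, 0 ≤ p x) ∧ ∑ x, p x = 1},
          (∑ x, c x * (p.1 x - p_data x)) + K p.1) = K p_data ∧
    (⨅ p : {p : X → ℝ // (∀ x, 0 ≤ p x) ∧ ∑ x, p x = 1},
        (∑ x, (-(D (Pi.single x 1))) * (p.1 x - p_data x)) + K p.1)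
      = K p_data := by
  set P := {p : X → ℝ // (∀ x, 0 ≤ p x) ∧ ∑ x, p x = 1} with hP
  let p₀ : P := ⟨p_data, hp_data_nonneg, hp_data_sum⟩
  haveI : Nonempty P := ⟨p₀⟩
  have key : ∀ p : P, K p_data + D (p.1 - p_data) ≤ K p.1 :=
    fun p => grad_ineq hK_conv hK p.1
  have hone : ∀ p : P, ∀ x, p.1 x ≤ 1 := by
    intro p x
    have h := Finset.single_le_sum (f := p.1) (fun i _ => p.2.1 i) (Finset.mem_univ x)
    rwa [p.2.2] at h
  have hone₀ : ∀ x, p_data x ≤ 1 := by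
    intro x
    have h := Finset.single_le_sum (f := p_data) (fun i _ => hp_data_nonneg i) (Finset.mem_univ x)
    rwa [hp_data_sum] at h
  have hDsum : ∀ p : P, ∑ x, D (Pi.single x 1) * (p.1 x - p_data x) = D (p.1 - p_data) := by
    intro p
    rw [D_eq D (p.1 - p_data)]
    exact Finset.sum_congr rfl fun x _ => by rw [mul_comm]; rfl
  -- lower bound for the inner objective, for any c
  have hbd : ∀ c : X → ℝ, ∀ p : P,
      K p_data - 2 * ∑ x, |c x + D (Pi.single x 1)| ≤
        (∑ x, c x * (p.1 x - p_data x)) + K p.1 := by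
    intro c p
    have h1 : ∑ x, (c x + D (Pi.single x 1)) * (p.1 x - p_data x)
        = (∑ x, c x * (p.1 x - p_data x)) + D (p.1 - p_data) := by
      rw [← hDsum p, ← Finset.sum_add_distrib]
      exact Finset.sum_congr rfl fun x _ => by ring
    have h2 : -(2 * ∑ x, |c x + D (Pi.single x 1)|)
        ≤ ∑ x, (c x + D (Pi.single x 1)) * (p.1 x - p_data x) := by
      rw [Finset.mul_sum, ← Finset.sum_neg_distrib]
      refine Finset.sum_le_sum fun x _ => ?_
      have habs : |(c x + D (Pi.single x 1)) * (p.1 x - p_data x)| ≤ |c x + D (Pi.single x 1)| * 2 := by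
        rw [abs_mul]
        refine mul_le_mul_of_nonneg_left ?_ (abs_nonneg _)
        rw [abs_le]
        constructor
        · have := p.2.1 x; have := hone₀ x; linarith
        · have := hone p x; have := hp_data_nonneg x; linarith
      have := neg_abs_le ((c x + D (Pi.single x 1)) * (p.1 x - p_data x))
      nlinarith [abs_nonneg (c x + D (Pi.single x 1))]
    have h3 := key p
    nlinarith [h1, h2, h3]
  -- the inner objective at p₀ is K p_data
  have hat : ∀ c : X → ℝ, (∑ x, c x * (p₀.1 x - p_data x)) + K p₀.1 = K p_data := by
    intro c; simp [show p₀.1 = p_data from rfl]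
  -- each inner infimum is ≤ K p_data
  have hle : ∀ c : X → ℝ,
      (⨅ p : P, (∑ x, c x * (p.1 x - p_data x)) + K p.1) ≤ K p_data := by
    intro c
    have := ciInf_le (f := fun p : P => (∑ x, c x * (p.1 x - p_data x)) + K p.1)
      ⟨K p_data - 2 * ∑ x, |c x + D (Pi.single x 1)|, by
        rintro y ⟨p, rfl⟩; exact hbd c p⟩ p₀
    calc (⨅ p : P, (∑ x, c x * (p.1 x - p_data x)) + K p.1)
        ≤ (∑ x, c x * (p₀.1 x - p_data x)) + K p₀.1 := this
      _ = K p_data := hat c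
  -- the second conjunct
  have hinf : (⨅ p : P, (∑ x, (-(D (Pi.single x 1))) * (p.1 x - p_data x)) + K p.1)
      = K p_data := by
    refine le_antisymm (hle _) (le_ciInf fun p => ?_)
    have h1 : ∑ x, (-(D (Pi.single x 1))) * (p.1 x - p_data x) = -(D (p.1 - p_data)) := by
      rw [← hDsum p, ← Finset.sum_neg_distrib]
      exact Finset.sum_congr rfl fun x _ => by ring
    rw [h1]
    have := key p
    linarith
  refine ⟨le_antisymm (ciSup_le hle) ?_, hinf⟩
  exact le_ciSup_of_le ⟨K p_data, by rintro y ⟨c, rfl⟩; exact hle c⟩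
    (fun x => -(D (Pi.single x 1))) hinf.ge
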